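/- arXiv:1111.4319 — 2 statements merged into one kernel-verified Lean document; each statement's English description precedes it below -/
import Mathlib

section
/- Let n and k be integers with k ≥ 2 and n ≥ 2k. Suppose S is a q-covering design C_2(n−k+1, k, 2) (a finite set of k-dimensional subspaces of F_2^{n−k+1} covering all 2-dimensional subspaces), U is an (n−k)-dimensional subspace of F_2^{n−k+1}, and c is the number of elements X ∈ S with X ⊆ U. Then 𝒞_2(n, k, 2) ≤ 2^{2(n−k)} + (2^k−1)·|S| − (2^k−2)·c. -/
open Module

/-- `coveringNumber F n k r` is the minimum number of `k`-dimensional `F`-linear subspaces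
of `F^n` needed so that every `r`-dimensional subspace is contained in at least one of them. -/
noncomputable def coveringNumber (F : Type) [Field F] (n k r : ℕ) : ℕ :=
  sInf { m : ℕ | ∃ S : Finset (Submodule F (Fin n → F)),
    S.card = m ∧
    (∀ X ∈ S, finrank F X = k) ∧
    (∀ Y : Submodule F (Fin n → F), finrank F Y = r → ∃ X ∈ S, Y ≤ X) }

namespace ImpCMRD

abbrev F := ZMod 2
abbrev E (n : ℕ) := Fin n → F

/-! ### Coordinate splitting of `F^n` into the first `k` and last `n - k` coordinates -/

section coords
variable (n k : ℕ)
noncomputable def pi1 (hkn : k ≤ n) : E n →ₗ[F] (Fin k → F) :=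
  LinearMap.funLeft F F (Fin.castLE hkn)
noncomputable def pi2 : E n →ₗ[F] (Fin (n - k) → F) :=
  LinearMap.funLeft F F (fun i => ⟨k + i.val, by omega⟩)
noncomputable def emb1 (hkn : k ≤ n) : (Fin k → F) →ₗ[F] E n where
  toFun v := fun j => if h : (j : ℕ) < k then v ⟨j, h⟩ else 0
  map_add' u v := by funext j; dsimp; split <;> simp
  map_smul' c v := by funext j; dsimp; split <;> simp
noncomputable def emb2 : (Fin (n - k) → F) →ₗ[F] E n where
  toFun v := fun j => if h : k ≤ (j : ℕ) then v ⟨(j : ℕ) - k, by omega⟩ else 0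
  map_add' u v := by funext j; dsimp; split <;> simp
  map_smul' c v := by funext j; dsimp; split <;> simp
variable {n k}
@[simp] lemma pi1_emb1 (hkn : k ≤ n) (v : Fin k → F) : pi1 n k hkn (emb1 n k hkn v) = v := by
  funext i
  simp only [pi1, emb1, LinearMap.funLeft_apply, LinearMap.coe_mk, AddHom.coe_mk, Function.comp]
  rw [dif_pos (by simpa using i.isLt)]
  congr 1
@[simp] lemma pi1_emb2 (hkn : k ≤ n) (v : Fin (n - k) → F) : pi1 n k hkn (emb2 n k v) = 0 := by
  funext i
  simp only [pi1, emb2, LinearMap.funLeft_apply, LinearMap.coe_mk, AddHom.coe_mk, Function.comp]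
  rw [dif_neg (by simp)]
  rfl
@[simp] lemma pi2_emb2 (v : Fin (n - k) → F) : pi2 n k (emb2 n k v) = v := by
  funext i
  simp only [pi2, emb2, LinearMap.funLeft_apply, LinearMap.coe_mk, AddHom.coe_mk, Function.comp]
  rw [dif_pos (by simp)]
  congr 1
  ext; simp
@[simp] lemma pi2_emb1 (hkn : k ≤ n) (v : Fin k → F) : pi2 n k (emb1 n k hkn v) = 0 := by
  funext i
  simp only [pi2, emb1, LinearMap.funLeft_apply, LinearMap.coe_mk, AddHom.coe_mk, Function.comp]
  rw [dif_neg (by simp)]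
  rfl
lemma split_eq (hkn : k ≤ n) (e : E n) :
    emb1 n k hkn (pi1 n k hkn e) + emb2 n k (pi2 n k e) = e := by
  funext j
  simp only [Pi.add_apply, emb1, emb2, pi1, pi2, LinearMap.funLeft_apply, LinearMap.coe_mk,
    AddHom.coe_mk, Function.comp]
  by_cases h : (j : ℕ) < k
  · rw [dif_pos h, dif_neg (by omega)]
    simp only [add_zero]
    congr 1
  · rw [dif_neg h, dif_pos (by omega)]
    simp only [zero_add]
    congr 1
    ext; simp; omega
lemma emb1_inj (hkn : k ≤ n) : Function.Injective (emb1 n k hkn) := by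
  intro u v h
  have := congrArg (pi1 n k hkn) h
  simpa using this
lemma emb2_inj : Function.Injective (emb2 n k : _ →ₗ[F] E n) := by
  intro u v h
  have := congrArg (pi2 n k) h
  simpa using this
lemma ker_pi1 (hkn : k ≤ n) :
    LinearMap.ker (pi1 n k hkn) = LinearMap.range (emb2 n k : _ →ₗ[F] E n) := by
  ext e
  simp only [LinearMap.mem_ker, LinearMap.mem_range]
  constructor
  · intro h
    refine ⟨pi2 n k e, ?_⟩
    conv_rhs => rw [← split_eq hkn e]
    rw [h, map_zero, zero_add]
  · rintro ⟨v, rfl⟩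
    exact pi1_emb2 hkn v
end coords

/-! ### The interpolation code from a Galois field (the lifted MRD code) -/

section galois
noncomputable def bL (m : ℕ) (hm : m ≠ 0) : Basis (Fin m) F (GaloisField 2 m) :=
  (Module.finBasis F (GaloisField 2 m)).reindex (finCongr (GaloisField.finrank 2 hm))
noncomputable def iota (k m : ℕ) (hm : m ≠ 0) (hkm : k ≤ m) :
    (Fin k → F) →ₗ[F] GaloisField 2 m :=
  ∑ i : Fin k, (LinearMap.proj i).smulRight (bL m hm (Fin.castLE hkm i))
lemma iota_apply (k m : ℕ) (hm : m ≠ 0) (hkm : k ≤ m) (v : Fin k → F) :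
    iota k m hm hkm v = ∑ i : Fin k, v i • bL m hm (Fin.castLE hkm i) := by
  simp [iota]
lemma iota_inj (k m : ℕ) (hm : m ≠ 0) (hkm : k ≤ m) :
    Function.Injective (iota k m hm hkm) := by
  have li : LinearIndependent F (fun i : Fin k => bL m hm (Fin.castLE hkm i)) :=
    (bL m hm).linearIndependent.comp _ (Fin.castLE_injective hkm)
  rw [injective_iff_map_eq_zero]
  intro v hv
  rw [iota_apply] at hv
  funext i
  exact Fintype.linearIndependent_iff.mp li v hv i
noncomputable def sqq (m : ℕ) : GaloisField 2 m →ₗ[F] GaloisField 2 m where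
  toFun t := t ^ 2
  map_add' u v := add_pow_char u v 2
  map_smul' c v := by
    have h : c = 0 ∨ c = 1 := by revert c; decide
    rcases h with h | h <;> subst h <;> simp
lemma interp (m : ℕ) (t₁ t₂ q₁ q₂ : GaloisField 2 m) (h1 : t₁ ≠ 0) (h2 : t₂ ≠ 0)
    (h12 : t₁ ≠ t₂) : ∃ a b : GaloisField 2 m,
      a * t₁ + b * t₁ ^ 2 = q₁ ∧ a * t₂ + b * t₂ ^ 2 = q₂ := by
  have hD : t₁ * t₂ ^ 2 - t₂ * t₁ ^ 2 ≠ 0 := by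
    have : t₁ * t₂ ^ 2 - t₂ * t₁ ^ 2 = t₁ * t₂ * (t₂ - t₁) := by ring
    rw [this]
    exact mul_ne_zero (mul_ne_zero h1 h2) (sub_ne_zero.mpr (Ne.symm h12))
  refine ⟨(q₁ * t₂ ^ 2 - q₂ * t₁ ^ 2) / (t₁ * t₂ ^ 2 - t₂ * t₁ ^ 2),
      (t₁ * q₂ - t₂ * q₁) / (t₁ * t₂ ^ 2 - t₂ * t₁ ^ 2), ?_, ?_⟩ <;>
    field_simp <;> ring
end galois

/-! ### The lifted MRD subspaces and their covering property -/

section mrd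
variable {n k : ℕ} (hkn : k ≤ n) (hm : n - k ≠ 0) (hkm : k ≤ n - k)

noncomputable def phiL (hm : n - k ≠ 0) : GaloisField 2 (n - k) ≃ₗ[F] (Fin (n - k) → F) :=
  (bL (n - k) hm).equivFun

noncomputable def fab (hm : n - k ≠ 0) (hkm : k ≤ n - k) (a b : GaloisField 2 (n - k)) :
    (Fin k → F) →ₗ[F] GaloisField 2 (n - k) :=
  (LinearMap.mulLeft F a).comp (iota k (n - k) hm hkm) +
    (LinearMap.mulLeft F b).comp ((sqq (n - k)).comp (iota k (n - k) hm hkm))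

lemma fab_apply (a b : GaloisField 2 (n - k)) (v : Fin k → F) :
    fab hm hkm a b v = a * iota k (n - k) hm hkm v + b * (iota k (n - k) hm hkm v) ^ 2 := by
  simp [fab, sqq]

noncomputable def mrdMap (a b : GaloisField 2 (n - k)) : (Fin k → F) →ₗ[F] E n :=
  emb1 n k hkn + (emb2 n k).comp ((phiL hm).toLinearMap.comp (fab hm hkm a b))

lemma pi1_mrdMap (a b : GaloisField 2 (n - k)) (v : Fin k → F) :
    pi1 n k hkn (mrdMap hkn hm hkm a b v) = v := by
  simp [mrdMap]

lemma mrdMap_inj (a b : GaloisField 2 (n - k)) :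
    Function.Injective (mrdMap hkn hm hkm a b) := by
  intro u v h
  have := congrArg (pi1 n k hkn) h
  rwa [pi1_mrdMap, pi1_mrdMap] at this

lemma finrank_mrd (a b : GaloisField 2 (n - k)) :
    finrank F (LinearMap.range (mrdMap hkn hm hkm a b)) = k := by
  rw [LinearMap.finrank_range_of_inj (mrdMap_inj hkn hm hkm a b)]
  simp

lemma mem_mrd_range (a b : GaloisField 2 (n - k)) (e : E n)
    (h : phiL hm (fab hm hkm a b (pi1 n k hkn e)) = pi2 n k e) :
    e ∈ LinearMap.range (mrdMap hkn hm hkm a b) := by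
  refine ⟨pi1 n k hkn e, ?_⟩
  simp only [mrdMap, LinearMap.add_apply, LinearMap.comp_apply, LinearEquiv.coe_coe, h]
  exact split_eq hkn e

lemma mrd_coverage (Y : Submodule F (E n)) (hY : finrank F Y = 2)
    (hdisj : Y ⊓ LinearMap.ker (pi1 n k hkn) = ⊥) :
    ∃ a b, Y ≤ LinearMap.range (mrdMap hkn hm hkm a b) := by
  classical
  have : FiniteDimensional F Y := inferInstance
  let bY : Basis (Fin 2) F Y := (Module.finBasis F Y).reindex (finCongr (by rw [hY]))
  set y : Fin 2 → E n := fun i => (bY i : E n) with hy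
  have hYmem : ∀ i, y i ∈ Y := fun i => (bY i).2
  have hker : ∀ e ∈ Y, pi1 n k hkn e = 0 → e = 0 := by
    intro e he h0
    have : e ∈ Y ⊓ LinearMap.ker (pi1 n k hkn) := ⟨he, h0⟩
    rwa [hdisj, Submodule.mem_bot] at this
  set t : Fin 2 → GaloisField 2 (n - k) := fun i => iota k (n - k) hm hkm (pi1 n k hkn (y i))
    with ht
  have hbne : ∀ i, y i ≠ 0 := by
    intro i h
    exact bY.ne_zero i (Submodule.coe_eq_zero.mp h)
  have htne : ∀ i, t i ≠ 0 := by
    intro i h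
    have : pi1 n k hkn (y i) = 0 := by
      apply iota_inj k (n - k) hm hkm
      simpa using h
    exact hbne i (hker _ (hYmem i) this)
  have ht12 : t 0 ≠ t 1 := by
    intro h
    have h2 : pi1 n k hkn (y 0) = pi1 n k hkn (y 1) := iota_inj k (n - k) hm hkm h
    have h3 : pi1 n k hkn (y 0 - y 1) = 0 := by rw [map_sub, h2, sub_self]
    have h4 : y 0 - y 1 = 0 := hker _ (sub_mem (hYmem 0) (hYmem 1)) h3
    have h5 : bY 0 = bY 1 := Subtype.ext (sub_eq_zero.mp h4)
    exact (by decide : (0 : Fin 2) ≠ 1) (bY.injective h5)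
  set q : Fin 2 → GaloisField 2 (n - k) := fun i => (phiL hm).symm (pi2 n k (y i)) with hq
  obtain ⟨a, b, hab1, hab2⟩ := interp (n - k) (t 0) (t 1) (q 0) (q 1) (htne 0) (htne 1) ht12
  refine ⟨a, b, ?_⟩
  intro e he
  apply mem_mrd_range
  have hrep : (⟨e, he⟩ : Y) = bY.repr ⟨e, he⟩ 0 • bY 0 + bY.repr ⟨e, he⟩ 1 • bY 1 := by
    have := bY.sum_repr ⟨e, he⟩
    rw [Fin.sum_univ_two] at this
    exact this.symm
  have hrepE : e = bY.repr ⟨e, he⟩ 0 • y 0 + bY.repr ⟨e, he⟩ 1 • y 1 := by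
    have := congrArg (Subtype.val) hrep
    simpa using this
  have key : ∀ i, phiL hm (fab hm hkm a b (pi1 n k hkn (y i))) = pi2 n k (y i) := by
    intro i
    have : fab hm hkm a b (pi1 n k hkn (y i)) = q i := by
      rw [fab_apply]
      fin_cases i
      · exact hab1
      · exact hab2
    rw [this, hq]
    exact (phiL hm).apply_symm_apply _
  rw [hrepE]
  simp only [map_add, map_smul, key]
end mrd

/-! ### A functional cutting out a hyperplane -/

section hyperplane
variable {V : Type} [AddCommGroup V] [Module F V] [FiniteDimensional F V]

lemma exists_functional (U : Submodule F V) (hU : finrank F U + 1 = finrank F V) :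
    ∃ g : V →ₗ[F] F, LinearMap.ker g = U := by
  have hq : finrank F (V ⧸ U) = 1 := by
    have := Submodule.finrank_quotient_add_finrank U
    omega
  let bQ : Basis (Fin 1) F (V ⧸ U) := (Module.finBasis F (V ⧸ U)).reindex (finCongr (by rw [hq]))
  refine ⟨(LinearMap.proj 0).comp (bQ.equivFun.toLinearMap.comp U.mkQ), ?_⟩
  ext v
  simp only [LinearMap.mem_ker, LinearMap.comp_apply, LinearMap.proj_apply, LinearEquiv.coe_coe]
  constructor
  · intro h
    have h2 : bQ.equivFun (U.mkQ v) = 0 := by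
      funext i
      have : i = 0 := Subsingleton.elim _ _
      rw [this]; exact h
    have h3 : U.mkQ v = 0 := by
      apply bQ.equivFun.injective
      rw [h2]
      simp
    simpa [Submodule.mkQ_apply, Submodule.Quotient.mk_eq_zero] using h3
  · intro h
    have : U.mkQ v = 0 := by simpa [Submodule.Quotient.mk_eq_zero] using h
    rw [this]
    simp
end hyperplane

/-! ### The maps `Φ_x` used to cover the remaining 2-dimensional subspaces -/

section phi
variable {n k : ℕ} (hkn : k ≤ n)
  (U : Submodule F (E (n - k + 1))) (g : E (n - k + 1) →ₗ[F] F)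
  (hg : LinearMap.ker g = U) (u0 : E (n - k + 1)) (hu0 : g u0 = 1)
  (theta0 : U ≃ₗ[F] (Fin (n - k) → F))

noncomputable def rho : E (n - k + 1) →ₗ[F] U :=
  LinearMap.codRestrict U (LinearMap.id - g.smulRight u0) (by
    intro v
    rw [← hg]
    simp [hu0, mul_comm])

lemma rho_coe (v : E (n - k + 1)) : (rho U g hg u0 hu0 v : E (n - k + 1)) = v - g v • u0 := rfl

lemma rho_mem (u : E (n - k + 1)) (hu : u ∈ U) : rho U g hg u0 hu0 u = ⟨u, hu⟩ := by
  apply Subtype.ext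
  rw [rho_coe]
  have : g u = 0 := by rw [← LinearMap.mem_ker, hg]; exact hu
  simp [this]

noncomputable def Phi (x : Fin k → F) : E (n - k + 1) →ₗ[F] E n :=
  (emb2 n k).comp (theta0.toLinearMap.comp (rho U g hg u0 hu0)) +
    g.smulRight (emb1 n k hkn x)

lemma Phi_apply (x : Fin k → F) (v : E (n - k + 1)) :
    Phi hkn U g hg u0 hu0 theta0 x v =
      emb2 n k (theta0 (rho U g hg u0 hu0 v)) + g v • emb1 n k hkn x := rfl

lemma Phi_mem_apply (x : Fin k → F) (u : E (n - k + 1)) (hu : u ∈ U) :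
    Phi hkn U g hg u0 hu0 theta0 x u = emb2 n k (theta0 ⟨u, hu⟩) := by
  rw [Phi_apply, rho_mem U g hg u0 hu0 u hu]
  have : g u = 0 := by rw [← LinearMap.mem_ker, hg]; exact hu
  simp [this]

lemma Phi_inj (x : Fin k → F) (hx : x ≠ 0) :
    Function.Injective (Phi hkn U g hg u0 hu0 theta0 x) := by
  rw [injective_iff_map_eq_zero]
  intro v hv
  have h1 := congrArg (pi1 n k hkn) hv
  rw [Phi_apply] at h1
  simp only [map_add, map_smul, pi1_emb1, pi1_emb2, map_zero, smul_zero, zero_add] at h1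
  have hgv : g v = 0 := by
    by_contra h
    have hall : ∀ w : ZMod 2, w ≠ 0 → w = 1 := by decide
    have : g v = 1 := hall _ h
    rw [this, one_smul] at h1
    exact hx h1
  rw [Phi_apply, hgv, zero_smul, add_zero] at hv
  have h2 : theta0 (rho U g hg u0 hu0 v) = 0 := by
    apply emb2_inj
    rw [hv, map_zero]
  have h3 : rho U g hg u0 hu0 v = 0 := by
    apply theta0.injective
    rw [h2, map_zero]
  have h4 := congrArg (Subtype.val) h3
  rw [rho_coe, hgv, zero_smul, sub_zero] at h4
  exact h4

lemma Phi_u0 (x : Fin k → F) : Phi hkn U g hg u0 hu0 theta0 x u0 = emb1 n k hkn x := by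
  rw [Phi_apply]
  have : rho U g hg u0 hu0 u0 = 0 := by
    apply Subtype.ext
    rw [rho_coe, hu0, one_smul, sub_self]
    rfl
  rw [this, map_zero, map_zero, hu0, one_smul, zero_add]

lemma emb2_range_le_Phi_range (x : Fin k → F) :
    LinearMap.range (emb2 n k : _ →ₗ[F] E n) ≤
      LinearMap.range (Phi hkn U g hg u0 hu0 theta0 x) := by
  rintro _ ⟨z, rfl⟩
  refine ⟨(theta0.symm z : E (n - k + 1)), ?_⟩
  rw [Phi_mem_apply hkn U g hg u0 hu0 theta0 x _ (theta0.symm z).2]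
  congr 1
  convert theta0.apply_symm_apply z

lemma Phi_map_eq (x x' : Fin k → F) (X : Submodule F (E (n - k + 1))) (hXU : X ≤ U) :
    Submodule.map (Phi hkn U g hg u0 hu0 theta0 x) X =
      Submodule.map (Phi hkn U g hg u0 hu0 theta0 x') X := by
  have key : ∀ v ∈ X, Phi hkn U g hg u0 hu0 theta0 x v = Phi hkn U g hg u0 hu0 theta0 x' v := by
    intro v hv
    rw [Phi_mem_apply hkn U g hg u0 hu0 theta0 x v (hXU hv),
      Phi_mem_apply hkn U g hg u0 hu0 theta0 x' v (hXU hv)]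
  ext e
  simp only [Submodule.mem_map]
  constructor
  · rintro ⟨v, hv, rfl⟩
    exact ⟨v, hv, (key v hv).symm⟩
  · rintro ⟨v, hv, rfl⟩
    exact ⟨v, hv, key v hv⟩
end phi

/-! ### Covering the remaining 2-dimensional subspaces -/

section cover2
variable {n k : ℕ} (hkn : k ≤ n)

lemma cover2 (hk2 : 2 ≤ k) (Y : Submodule F (E n)) (hY : finrank F Y = 2)
    (hnd : Y ⊓ LinearMap.ker (pi1 n k hkn) ≠ ⊥) :
    ∃ x : Fin k → F, x ≠ 0 ∧
      Y ≤ LinearMap.range (emb2 n k : _ →ₗ[F] E n) ⊔ Submodule.span F {emb1 n k hkn x} := by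
  classical
  have hsplitY : ∀ y ∈ Y, pi1 n k hkn y ∈ Submodule.map (pi1 n k hkn) Y :=
    fun y hy => Submodule.mem_map_of_mem hy
  have hrank : finrank F (Submodule.map (pi1 n k hkn) Y) ≤ 1 := by
    have hrn := LinearMap.finrank_range_add_finrank_ker ((pi1 n k hkn).domRestrict Y)
    rw [LinearMap.range_domRestrict] at hrn
    have hker1 : 0 < finrank F (LinearMap.ker ((pi1 n k hkn).domRestrict Y)) := by
      obtain ⟨w, hw, hwne⟩ := Submodule.exists_mem_ne_zero_of_ne_bot hnd
      rw [Module.finrank_pos_iff]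
      refine nontrivial_of_ne ⟨⟨w, hw.1⟩, ?_⟩ 0 ?_
      · simpa [LinearMap.mem_ker] using hw.2
      · intro h
        apply hwne
        simpa [Subtype.ext_iff] using h
    rw [hY] at hrn
    omega
  by_cases hbot : Submodule.map (pi1 n k hkn) Y = ⊥
  · refine ⟨fun _ => 1, ?_, ?_⟩
    · intro h
      have := congrFun h ⟨0, by omega⟩
      simpa using this
    · intro y hy
      have h0 : pi1 n k hkn y = 0 := by
        have := hsplitY y hy
        rwa [hbot, Submodule.mem_bot] at this
      have : y = emb2 n k (pi2 n k y) := by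
        conv_lhs => rw [← split_eq hkn y]
        rw [h0, map_zero, zero_add]
      rw [this]
      exact Submodule.mem_sup_left ⟨_, rfl⟩
  · obtain ⟨x, hxmem, hxne⟩ := Submodule.exists_mem_ne_zero_of_ne_bot hbot
    refine ⟨x, hxne, ?_⟩
    have hspan : Submodule.map (pi1 n k hkn) Y = Submodule.span F {x} := by
      symm
      apply Submodule.eq_of_le_of_finrank_le
      · rw [Submodule.span_le, Set.singleton_subset_iff]
        exact hxmem
      · rw [finrank_span_singleton hxne]
        exact hrank
    intro y hy
    have hx1 : pi1 n k hkn y ∈ Submodule.span F {x} := by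
      rw [← hspan]
      exact hsplitY y hy
    obtain ⟨a, ha⟩ := Submodule.mem_span_singleton.mp hx1
    have : y = a • emb1 n k hkn x + emb2 n k (pi2 n k y) := by
      conv_lhs => rw [← split_eq hkn y]
      rw [← ha, map_smul]
    rw [this]
    exact add_mem (Submodule.mem_sup_right (Submodule.smul_mem _ a
      (Submodule.subset_span rfl))) (Submodule.mem_sup_left ⟨_, rfl⟩)
end cover2

end ImpCMRD

open ImpCMRD in
set_option maxHeartbeats 2000000 in
/-- The improved recursive construction from a lifted MRD code, for $r = 2$. -/
theorem improved_CMRD (n k : ℕ) (hk : 2 ≤ k) (hn : 2 * k ≤ n)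
    (S : Finset (Submodule (ZMod 2) (Fin (n - k + 1) → ZMod 2)))
    (hdim : ∀ X ∈ S, finrank (ZMod 2) X = k)
    (hcov : ∀ Y : Submodule (ZMod 2) (Fin (n - k + 1) → ZMod 2),
      finrank (ZMod 2) Y = 2 → ∃ X ∈ S, Y ≤ X)
    (U : Submodule (ZMod 2) (Fin (n - k + 1) → ZMod 2))
    (hU : finrank (ZMod 2) U = n - k)
    (c : ℕ)
    (hc : c = {X : Submodule (ZMod 2) (Fin (n - k + 1) → ZMod 2) | X ∈ S ∧ X ≤ U}.ncard) :
    (coveringNumber (ZMod 2) n k 2 : ℤ) ≤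
      2 ^ (2 * (n - k)) + (2 ^ k - 1) * S.card - (2 ^ k - 2) * c := by
  classical
  have hkn : k ≤ n := by omega
  have hm : n - k ≠ 0 := by omega
  have hkm : k ≤ n - k := by omega
  haveI : Fintype (GaloisField 2 (n - k)) := Fintype.ofFinite _
  -- the hyperplane functional on F^{n-k+1}
  have hUr : finrank ImpCMRD.F U + 1 = finrank ImpCMRD.F (E (n - k + 1)) := by
    rw [hU, Module.finrank_fin_fun]
  obtain ⟨g, hg⟩ := exists_functional U hUr
  have hgne : ∃ u0, g u0 = 1 := by
    by_contra h
    push_neg at h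
    have hz : ∀ v, g v = 0 := by
      intro v
      have hall : ∀ w : ZMod 2, w ≠ 1 → w = 0 := by decide
      exact hall _ (h v)
    have : U = ⊤ := by
      rw [← hg]
      ext v
      simp [LinearMap.mem_ker, hz]
    rw [this, finrank_top, Module.finrank_fin_fun] at hU
    omega
  obtain ⟨u0, hu0⟩ := hgne
  -- an equivalence U ≃ F^{n-k}
  have hUfr : finrank ImpCMRD.F U = finrank ImpCMRD.F (Fin (n - k) → ImpCMRD.F) := by
    rw [hU, Module.finrank_fin_fun]
  let theta0 : U ≃ₗ[ImpCMRD.F] (Fin (n - k) → ImpCMRD.F) := LinearEquiv.ofFinrankEq _ _ hUfr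
  -- the pieces of the covering family
  let T1 : Finset (Submodule ImpCMRD.F (E n)) :=
    Finset.image (fun ab : GaloisField 2 (n - k) × GaloisField 2 (n - k) =>
      LinearMap.range (mrdMap hkn hm hkm ab.1 ab.2)) Finset.univ
  let N : Finset (Fin k → ImpCMRD.F) := Finset.univ \ {0}
  let SU : Finset (Submodule ImpCMRD.F (E (n - k + 1))) := S.filter (· ≤ U)
  let x0 : Fin k → ImpCMRD.F := fun _ => 1
  have hx0 : x0 ≠ 0 := by
    intro h
    have := congrFun h ⟨0, by omega⟩
    simpa [x0] using this
  let T2a : Finset (Submodule ImpCMRD.F (E n)) :=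
    Finset.image (fun p : (Fin k → ImpCMRD.F) × Submodule ImpCMRD.F (E (n - k + 1)) =>
      Submodule.map (Phi hkn U g hg u0 hu0 theta0 p.1) p.2) (N ×ˢ (S \ SU))
  let T2b : Finset (Submodule ImpCMRD.F (E n)) :=
    Finset.image (fun X => Submodule.map (Phi hkn U g hg u0 hu0 theta0 x0) X) SU
  let T := T1 ∪ T2a ∪ T2b
  -- T is a covering design
  have hdims : ∀ X ∈ T, finrank ImpCMRD.F X = k := by
    intro X hX
    rcases Finset.mem_union.mp hX with hX | hX
    · rcases Finset.mem_union.mp hX with hX | hX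
      · obtain ⟨ab, -, rfl⟩ := Finset.mem_image.mp hX
        exact finrank_mrd hkn hm hkm ab.1 ab.2
      · obtain ⟨p, hp, rfl⟩ := Finset.mem_image.mp hX
        obtain ⟨hpN, hpS⟩ := Finset.mem_product.mp hp
        have hxne : p.1 ≠ 0 := by
          intro h
          rw [Finset.mem_sdiff] at hpN
          exact hpN.2 (by simp [h])
        rw [← (Submodule.equivMapOfInjective _
          (Phi_inj hkn U g hg u0 hu0 theta0 p.1 hxne) p.2).finrank_eq]
        exact hdim p.2 (Finset.mem_sdiff.mp hpS).1
    · obtain ⟨X', hX', rfl⟩ := Finset.mem_image.mp hX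
      rw [← (Submodule.equivMapOfInjective _
        (Phi_inj hkn U g hg u0 hu0 theta0 x0 hx0) X').finrank_eq]
      exact hdim X' (Finset.mem_filter.mp hX').1
  have hcover : ∀ Y : Submodule ImpCMRD.F (E n), finrank ImpCMRD.F Y = 2 →
      ∃ X ∈ T, Y ≤ X := by
    intro Y hY
    by_cases hdisj : Y ⊓ LinearMap.ker (pi1 n k hkn) = ⊥
    · obtain ⟨a, b, hab⟩ := mrd_coverage hkn hm hkm Y hY hdisj
      refine ⟨_, ?_, hab⟩
      exact Finset.mem_union_left _ (Finset.mem_union_left _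
        (Finset.mem_image.mpr ⟨(a, b), Finset.mem_univ _, rfl⟩))
    · obtain ⟨x, hxne, hYle⟩ := cover2 hkn hk Y hY hdisj
      have hrange : Y ≤ LinearMap.range (Phi hkn U g hg u0 hu0 theta0 x) := by
        refine hYle.trans (sup_le (emb2_range_le_Phi_range hkn U g hg u0 hu0 theta0 x) ?_)
        rw [Submodule.span_le, Set.singleton_subset_iff]
        exact ⟨u0, Phi_u0 hkn U g hg u0 hu0 theta0 x⟩
      set Y' := Submodule.comap (Phi hkn U g hg u0 hu0 theta0 x) Y with hY'
      have hmapY : Submodule.map (Phi hkn U g hg u0 hu0 theta0 x) Y' = Y := by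
        rw [hY', Submodule.map_comap_eq]
        exact inf_eq_right.mpr hrange
      have hY'2 : finrank ImpCMRD.F Y' = 2 := by
        have heq := (Submodule.equivMapOfInjective _
          (Phi_inj hkn U g hg u0 hu0 theta0 x hxne) Y').finrank_eq
        rw [hmapY] at heq
        exact heq.trans hY
      obtain ⟨X, hXS, hYX⟩ := hcov Y' hY'2
      by_cases hXU : X ≤ U
      · refine ⟨Submodule.map (Phi hkn U g hg u0 hu0 theta0 x0) X, ?_, ?_⟩
        · exact Finset.mem_union_right _
            (Finset.mem_image.mpr ⟨X, Finset.mem_filter.mpr ⟨hXS, hXU⟩, rfl⟩)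
        · rw [← Phi_map_eq hkn U g hg u0 hu0 theta0 x x0 X hXU, ← hmapY]
          exact Submodule.map_mono hYX
      · refine ⟨Submodule.map (Phi hkn U g hg u0 hu0 theta0 x) X, ?_, ?_⟩
        · refine Finset.mem_union_left _ (Finset.mem_union_right _
            (Finset.mem_image.mpr ⟨(x, X), ?_, rfl⟩))
          refine Finset.mem_product.mpr ⟨?_, ?_⟩
          · exact Finset.mem_sdiff.mpr ⟨Finset.mem_univ _, by simpa using hxne⟩
          · exact Finset.mem_sdiff.mpr ⟨hXS, by simp [SU, Finset.mem_filter, hXU]⟩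
        · rw [← hmapY]
          exact Submodule.map_mono hYX
  -- the covering number is at most |T|
  have hcnle : coveringNumber (ZMod 2) n k 2 ≤ T.card :=
    Nat.sInf_le ⟨T, rfl, hdims, hcover⟩
  -- cardinality bounds
  have hSUc : SU.card = c := by
    rw [hc]
    have : {X : Submodule (ZMod 2) (Fin (n - k + 1) → ZMod 2) | X ∈ S ∧ X ≤ U} = ↑SU := by
      ext X
      simp [SU, Finset.mem_filter]
    rw [this, Set.ncard_coe_finset]
  have hcleS : c ≤ S.card := by
    rw [← hSUc]
    exact Finset.card_filter_le _ _
  have hT1 : T1.card ≤ 2 ^ (2 * (n - k)) := by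
    refine Finset.card_image_le.trans ?_
    rw [Finset.card_univ, Fintype.card_prod]
    have hcard : Fintype.card (GaloisField 2 (n - k)) = 2 ^ (n - k) := by
      rw [← Nat.card_eq_fintype_card]
      exact GaloisField.card 2 (n - k) hm
    rw [hcard, two_mul, pow_add]
  have hN : N.card = 2 ^ k - 1 := by
    rw [Finset.card_sdiff_of_subset (by simp), Finset.card_univ, Fintype.card_fun]
    simp
  have hT2a : T2a.card ≤ (2 ^ k - 1) * (S.card - c) := by
    refine Finset.card_image_le.trans ?_
    rw [Finset.card_product, hN, Finset.card_sdiff_of_subset (Finset.filter_subset _ _), hSUc]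
  have hT2b : T2b.card ≤ c := by
    refine Finset.card_image_le.trans ?_
    rw [hSUc]
  have hTcard : T.card ≤ 2 ^ (2 * (n - k)) + (2 ^ k - 1) * (S.card - c) + c := by
    calc T.card ≤ (T1 ∪ T2a).card + T2b.card := Finset.card_union_le _ _
    _ ≤ T1.card + T2a.card + T2b.card := by
        have := Finset.card_union_le T1 T2a
        omega
    _ ≤ 2 ^ (2 * (n - k)) + (2 ^ k - 1) * (S.card - c) + c := by
        omega
  -- conclude over ℤ
  have hfinal : (coveringNumber (ZMod 2) n k 2 : ℤ) ≤
      ((2 ^ (2 * (n - k)) + (2 ^ k - 1) * (S.card - c) + c : ℕ) : ℤ) := by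
    exact_mod_cast hcnle.trans hTcard
  refine hfinal.trans ?_
  have h1 : (1 : ℕ) ≤ 2 ^ k := Nat.one_le_two_pow
  push_cast [Nat.cast_sub hcleS, Nat.cast_sub h1]
  have hc' : (0 : ℤ) ≤ (c : ℤ) := by positivity
  ring_nf
  nlinarith [hc', (by exact_mod_cast Nat.one_le_two_pow : (1:ℤ) ≤ 2 ^ k)]
end

section
/- Let k ≥ 1 and r ≥ 1 be integers, let α be a generator of the multiplicative group of the finite field F_{2^k}, and let X be an F_2-linear subspace of F_{2^k} (regarded as a vector space over F_2) of dimension r. If 2^k−1 and 2^r−1 are relatively prime, then the subspaces α^j·X = { α^j · x : x ∈ X } for 0 ≤ j ≤ 2^k−2 are pairwise distinct; that is, the set { α^j·X : 0 ≤ j ≤ 2^k−2 } contains exactly 2^k−1 distinct r-dimensional F_2-subspaces of F_{2^k}. -/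
open Module

open Pointwise in
/-- If a finite group acts on `X` preserving it, and the set of nonzero elements of `X`
is acted on freely, key cardinality divisibility. -/
theorem distinct_multiples_stab_trivial (k r : ℕ) (hk : 1 ≤ k) (hr : 1 ≤ r)
    (F : Type) [Field F] [Fintype F] [Algebra (ZMod 2) F]
    (hcard : Fintype.card F = 2 ^ k)
    (X : Submodule (ZMod 2) F) (hX : finrank (ZMod 2) X = r)
    (hcop : Nat.Coprime (2 ^ k - 1) (2 ^ r - 1)) :
    MulAction.stabilizer Fˣ X = ⊥ := by
  classical
  set G := MulAction.stabilizer Fˣ X with hG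
  -- the set of nonzero elements of X
  let S := {x : F // x ∈ X ∧ x ≠ 0}
  -- G acts on S
  letI : SMul G S := ⟨fun g x => ⟨(g : Fˣ) • (x : F), by
    have hx := x.2.1
    have : (g : Fˣ) • (x : F) ∈ (g : Fˣ) • X := Submodule.smul_mem_pointwise_smul _ _ _ hx
    rwa [g.2] at this, by
    have := x.2.2
    simp [Units.smul_def, this]⟩⟩
  letI : MulAction G S :=
    { one_smul := fun x => Subtype.ext (one_smul Fˣ (x : F))
      mul_smul := fun g h x => Subtype.ext (mul_smul (g : Fˣ) (h : Fˣ) (x : F)) }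
  have smul_coe : ∀ (g : G) (x : S), ((g • x : S) : F) = (g : Fˣ) • (x : F) :=
    fun _ _ => rfl
  -- the action on S is free
  have hfree : ∀ x : S, MulAction.stabilizer G x = ⊥ := by
    intro x
    ext g
    simp only [Subgroup.mem_bot, MulAction.mem_stabilizer_iff]
    constructor
    · intro h
      have h' : (g : Fˣ) • (x : F) = (x : F) := by
        have h2 := congrArg Subtype.val h
        exact (smul_coe g x) ▸ h2
      have hx0 : (x : F) ≠ 0 := x.2.2
      have : ((g : Fˣ) : F) * (x : F) = 1 * (x : F) := by
        simpa [Units.smul_def] using h'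
      have : ((g : Fˣ) : F) = 1 := mul_right_cancel₀ hx0 this
      exact Subtype.ext (Units.ext this)
    · rintro rfl; exact one_smul _ _
  -- card S = 2^r - 1
  haveI : Fintype S := Fintype.ofFinite S
  have hcardX : Fintype.card X = 2 ^ r := by
    have := card_eq_pow_finrank (K := ZMod 2) (V := X)
    rwa [ZMod.card, hX] at this
  have hcardS : Fintype.card S = 2 ^ r - 1 := by
    have e : S ≃ {x : X // x ≠ 0} :=
      { toFun := fun x => ⟨⟨x.1, x.2.1⟩, fun h => x.2.2 (congrArg Subtype.val h)⟩
        invFun := fun x => ⟨(x : X), (x : X).2, fun h => x.2 (Subtype.ext h)⟩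
        left_inv := fun x => rfl
        right_inv := fun x => rfl }
    rw [Fintype.card_congr e]
    have h3 : Fintype.card {x : X // x ≠ 0} = Fintype.card X - Fintype.card {x : X // x = 0} :=
      Fintype.card_subtype_compl _
    rw [h3, Fintype.card_subtype_eq (0 : X), hcardX]
  -- card G divides card S via the class formula
  haveI : Fintype (Quotient (MulAction.orbitRel G S)) := Fintype.ofFinite _
  have hclass := MulAction.card_eq_sum_card_group_div_card_stabilizer G S
  have hsum : Fintype.card S =
      (Fintype.card (Quotient (MulAction.orbitRel G S))) * Fintype.card G := by
    rw [hclass, Finset.sum_congr rfl (fun ω _ => ?_), Finset.sum_const, Finset.card_univ,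
      smul_eq_mul]
    have h1 : Fintype.card (MulAction.stabilizer G (Quotient.out ω)) = 1 := by
      rw [← Nat.card_eq_fintype_card, hfree, Subgroup.card_bot]
    rw [h1, Nat.div_one]
  have hdvd1 : Fintype.card G ∣ 2 ^ r - 1 := by
    rw [← hcardS, hsum]; exact ⟨_, Nat.mul_comm _ _⟩
  -- card G divides 2^k - 1
  have hcardU : Fintype.card Fˣ = 2 ^ k - 1 := by
    rw [Fintype.card_units, hcard]
  have hdvd2 : Fintype.card G ∣ 2 ^ k - 1 := by
    have := Subgroup.card_subgroup_dvd_card G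
    rwa [Nat.card_eq_fintype_card, Nat.card_eq_fintype_card, hcardU] at this
  have h1 : Fintype.card G = 1 := Nat.eq_one_of_dvd_coprimes hcop hdvd2 hdvd1
  refine Subgroup.eq_bot_of_card_eq G ?_
  rw [Nat.card_eq_fintype_card, h1]

/-- Multiplying an `r`-dimensional `𝔽₂`-subspace of `𝔽_{2^k}` by the powers
`α^0, α^1, …, α^{2^k-2}` of a generator `α` of the multiplicative group yields
`2^k - 1` pairwise distinct subspaces, provided `gcd(2^k-1, 2^r-1) = 1`. -/
theorem distinct_multiples (k r : ℕ) (hk : 1 ≤ k) (hr : 1 ≤ r)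
    (F : Type) [Field F] [Fintype F] [Algebra (ZMod 2) F]
    (hcard : Fintype.card F = 2 ^ k)
    (α : Fˣ) (hα : ∀ x : Fˣ, x ∈ Subgroup.zpowers α)
    (X : Submodule (ZMod 2) F) (hX : finrank (ZMod 2) X = r)
    (hcop : Nat.Coprime (2 ^ k - 1) (2 ^ r - 1)) :
    {Y : Submodule (ZMod 2) F |
      ∃ j ≤ 2 ^ k - 2,
        Y = Submodule.map (LinearMap.mulLeft (ZMod 2) ((α : F) ^ j)) X}.ncard =
      2 ^ k - 1 := by
  classical
  open Pointwise in
  have hstab := distinct_multiples_stab_trivial k r hk hr F hcard X hX hcop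
  have h2k : 2 ≤ 2 ^ k := by
    calc 2 = 2 ^ 1 := (pow_one 2).symm
    _ ≤ 2 ^ k := Nat.pow_le_pow_right (by norm_num) hk
  have hordα : orderOf α = 2 ^ k - 1 := by
    rw [orderOf_eq_card_of_forall_mem_zpowers hα, Nat.card_eq_fintype_card,
      Fintype.card_units, hcard]
  -- the map as pointwise smul
  have hlm : ∀ j : ℕ, LinearMap.mulLeft (ZMod 2) ((α : F) ^ j)
      = DistribMulAction.toLinearMap (ZMod 2) F (α ^ j) := by
    intro j; ext x; show _ = (α ^ j) • x; simp [Units.smul_def]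
  have hmap : ∀ j : ℕ, Submodule.map (LinearMap.mulLeft (ZMod 2) ((α : F) ^ j)) X
      = (α ^ j) • X := by
    intro j; rw [hlm]; rfl
  have hset : {Y : Submodule (ZMod 2) F |
      ∃ j ≤ 2 ^ k - 2,
        Y = Submodule.map (LinearMap.mulLeft (ZMod 2) ((α : F) ^ j)) X}
      = (fun j : ℕ => (α ^ j) • X) '' (Set.Iic (2 ^ k - 2)) := by
    ext Y
    simp only [Set.mem_setOf_eq, Set.mem_image, Set.mem_Iic]
    constructor
    · rintro ⟨j, hj, rfl⟩; exact ⟨j, hj, (hmap j).symm⟩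
    · rintro ⟨j, hj, rfl⟩; exact ⟨j, hj, hmap j⟩
  -- injectivity
  have hinj : Set.InjOn (fun j : ℕ => (α ^ j) • X) (Set.Iic (2 ^ k - 2)) := by
    intro i hi j hj hij
    simp only at hij
    rw [Set.mem_Iic] at hi hj
    have hpow : α ^ i = α ^ j := by
      have h1 : ((α ^ i)⁻¹ * α ^ j) • X = X := by
        rw [mul_smul, ← hij]
        simp [← mul_smul]
      have : (α ^ i)⁻¹ * α ^ j ∈ MulAction.stabilizer Fˣ X := h1
      rw [hstab, Subgroup.mem_bot, inv_mul_eq_one] at this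
      exact this
    have hi' : i < orderOf α := by
      rw [hordα]; omega
    have hj' : j < orderOf α := by
      rw [hordα]; omega
    exact pow_injOn_Iio_orderOf hi' hj' hpow
  rw [hset, Set.ncard_image_of_injOn hinj]
  have : Set.Iic (2 ^ k - 2) = (Finset.Iic (2 ^ k - 2) : Finset ℕ) := by
    ext x; simp
  rw [this, Set.ncard_coe_finset, Nat.card_Iic]
  omega
end
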